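/- Suppose Γ acts by isometries on metric spaces Y₁, …, Y_D via actions ρ₁, …, ρ_D, each of which is acylindrical. Then the diagonal action of Γ on the product Y₁ × ⋯ × Y_D with the ℓ^∞-product metric is acylindrical. -/
import Mathlib


/-- The joint ε-coarse stabilizer Set_ε{x,y}. -/
def setEps {Γ Y : Type*} [Group Γ] [MetricSpace Y] (ρ : Γ →* (Y ≃ᵢ Y)) (ε : ℝ)
    (x y : Y) : Set Γ :=
  {g : Γ | dist (ρ g x) x ≤ ε ∧ dist (ρ g y) y ≤ ε}

/-- An acylindrical action. -/
def IsAcylindrical {Γ Y : Type*} [Group Γ] [MetricSpace Y] (ρ : Γ →* (Y ≃ᵢ Y)) : Prop :=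
  ∀ ε > (0:ℝ), ∃ R : ℝ, ∃ N : ℕ, ∀ x y : Y, R ≤ dist x y →
    (setEps ρ ε x y).Finite ∧ (setEps ρ ε x y).ncard ≤ N

/-- The diagonal action on a finite product (with the ℓ^∞-product metric,
i.e. the sup metric on the pi type) of acylindrical actions is acylindrical. -/
theorem stmt8 {Γ : Type*} [Group Γ] (D : ℕ) (Y : Fin D → Type*)
    [∀ i, MetricSpace (Y i)] (ρ : ∀ i, Γ →* (Y i ≃ᵢ Y i))
    (hacyl : ∀ i, IsAcylindrical (ρ i)) :
    ∀ ε > (0:ℝ), ∃ R : ℝ, ∃ N : ℕ, ∀ x y : (∀ i, Y i), R ≤ dist x y →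
      {g : Γ | dist (fun i => ρ i g (x i)) x ≤ ε ∧
        dist (fun i => ρ i g (y i)) y ≤ ε}.Finite ∧
      {g : Γ | dist (fun i => ρ i g (x i)) x ≤ ε ∧
        dist (fun i => ρ i g (y i)) y ≤ ε}.ncard ≤ N := by
  intro ε hε
  choose R N hRN using fun i => hacyl i ε hε
  refine ⟨1 + ∑ i, |R i|, Finset.univ.sup N, ?_⟩
  intro x y hxy
  have hRpos : (0:ℝ) < 1 + ∑ i, |R i| := by positivity
  have hne : ¬ dist x y < 1 + ∑ i, |R i| := not_lt.2 hxy
  rw [dist_pi_lt_iff hRpos] at hne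
  push_neg at hne
  obtain ⟨i, hi⟩ := hne
  have hRi : R i ≤ dist (x i) (y i) := by
    have h1 : |R i| ≤ ∑ j, |R j| :=
      Finset.single_le_sum (f := fun j => |R j|) (fun j _ => abs_nonneg _) (Finset.mem_univ i)
    have h2 : R i ≤ |R i| := le_abs_self _
    linarith
  obtain ⟨hfin, hcard⟩ := hRN i (x i) (y i) hRi
  have hsub : {g : Γ | dist (fun i => ρ i g (x i)) x ≤ ε ∧
      dist (fun i => ρ i g (y i)) y ≤ ε} ⊆ setEps (ρ i) ε (x i) (y i) := by
    intro g hg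
    exact ⟨(dist_pi_le_iff hε.le).1 hg.1 i, (dist_pi_le_iff hε.le).1 hg.2 i⟩
  exact ⟨hfin.subset hsub, le_trans (Set.ncard_le_ncard hsub hfin)
    (le_trans hcard (Finset.le_sup (Finset.mem_univ i)))⟩
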